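/- Suppose the primal is infeasible and let δ > 0 be such that every f ∈ F_K with ‖f‖_K ≤ δ lies in the convex hull of {y_i φ̃_{x_i}}. Then |ρ_K| ≥ δ, i.e., ρ_K ≤ −δ. -/

import Mathlib

open scoped RealInnerProductSpace

theorem stmt9 (n : ℕ) [NeZero n] {H : Type*} [NormedAddCommGroup H] [InnerProductSpace ℝ H]
    [CompleteSpace H]
    (v : Fin n → H) (hv : ∀ i, ‖v i‖ = 1)
    (ρ : ℝ)
    (hρ : ρ = ⨆ f : {f : H // ‖f‖ = 1},
      ⨅ p : stdSimplex ℝ (Fin n), ⟪(f : H), ∑ i, (p : Fin n → ℝ) i • v i⟫)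
    (hinfeas : ¬ ∃ f : H, ∀ i, 0 < ⟪f, v i⟫)
    (δ : ℝ) (hδ : 0 < δ)
    (hball : ∀ f : H, ‖f‖ ≤ δ → ∃ p ∈ stdSimplex ℝ (Fin n), f = ∑ i, p i • v i) :
    ρ ≤ -δ := by
  subst hρ
  have hne : Nonempty {f : H // ‖f‖ = 1} := ⟨⟨v 0, hv 0⟩⟩
  apply ciSup_le
  intro f
  obtain ⟨p, hp, hpe⟩ := hball (-(δ • (f : H))) (by
    simp [norm_smul, f.2, abs_of_pos hδ])
  have hbdd : BddBelow (Set.range fun p : stdSimplex ℝ (Fin n) =>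
      ⟪(f : H), ∑ i, (p : Fin n → ℝ) i • v i⟫) := by
    refine ⟨-1, ?_⟩
    rintro x ⟨⟨q, hq⟩, rfl⟩
    have h1 : ‖∑ i, q i • v i‖ ≤ 1 := by
      calc ‖∑ i, q i • v i‖ ≤ ∑ i, ‖q i • v i‖ := norm_sum_le _ _
        _ = ∑ i, q i := by
          refine Finset.sum_congr rfl fun i _ => ?_
          rw [norm_smul, hv i, mul_one, Real.norm_eq_abs, abs_of_nonneg (hq.1 i)]
        _ = 1 := hq.2
    have h2 := abs_real_inner_le_norm (f : H) (∑ i, q i • v i)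
    rw [f.2, one_mul] at h2
    have := (abs_le.mp (h2.trans h1)).1
    exact this
  calc (⨅ p : stdSimplex ℝ (Fin n), ⟪(f : H), ∑ i, (p : Fin n → ℝ) i • v i⟫)
      ≤ ⟪(f : H), ∑ i, p i • v i⟫ := ciInf_le hbdd ⟨p, hp⟩
    _ = ⟪(f : H), -(δ • (f : H))⟫ := by rw [← hpe]
    _ = -δ := by
        rw [inner_neg_right, real_inner_smul_right, real_inner_self_eq_norm_sq, f.2]
        ring
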